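/- Let r ≥ 1 and let G be a finitely additive ℚ_p-valued measure on (ℤ_p)^r satisfying the symmetry: for all clopen A ⊆ (ℤ_p)^r, G(A) − G(ι(A)) + G(τ(ι(A))) − G(τ⁻¹(A)) = 0, where ι(x₁,…,x_r) = (−x₁,…,−x_r) and τ(x₁,…,x_r) = (x₁+1,…,x_r+1). Then for all nonnegative integers n₁,…,n_{r−1}, n_r with n₁+⋯+n_r odd, ∫_{(ℤ_p)^r} (x₁−x₂)^{n₁}⋯(x_{r−1}−x_r)^{n_{r−1}} x_r^{n_r} dG(x₁,…,x_r) = 0. -/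

import Mathlib

open Filter Topology

/-- A `ℚ_p`-valued measure on `(ℤ_p)^r`: a compatible bounded family of functions
on `(ℤ/p^nℤ)^r`. -/
structure PadicMeasureV (p : ℕ) [Fact p.Prime] (r : ℕ) where
  val : ∀ n : ℕ, (Fin r → ZMod (p ^ n)) → ℚ_[p]
  compat : ∀ (n : ℕ) (x : Fin r → ZMod (p ^ n)),
    val n x = ∑ y ∈ Finset.univ.filter
      (fun y : Fin r → ZMod (p ^ (n + 1)) =>
        (fun j => ZMod.castHom (pow_dvd_pow p (Nat.le_succ n)) (ZMod (p ^ n)) (y j)) = x),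
      val (n + 1) y
  bounded : ∃ C : ℝ, ∀ (n : ℕ) (x : Fin r → ZMod (p ^ n)), ‖val n x‖ ≤ C

/-- Riemann sum of level `n` of `f` against the measure. -/
noncomputable def PadicMeasureV.riemannSum {p : ℕ} [Fact p.Prime] {r : ℕ}
    (μ : PadicMeasureV p r) (f : (Fin r → ℤ_[p]) → ℚ_[p]) (n : ℕ) : ℚ_[p] :=
  ∑ i : Fin r → ZMod (p ^ n), f (fun j => ((i j).val : ℤ_[p])) * μ.val n i

/-- `∫ f dμ = c` over `(ℤ_p)^r`, as a limit of Riemann sums. -/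
def PadicMeasureV.HasIntegral {p : ℕ} [Fact p.Prime] {r : ℕ}
    (μ : PadicMeasureV p r) (f : (Fin r → ℤ_[p]) → ℚ_[p]) (c : ℚ_[p]) : Prop :=
  Tendsto (μ.riemannSum f) atTop (𝓝 c)


namespace OddAux

variable {p : ℕ} [Fact p.Prime]


lemma norm_sum_le_of_le {α : Type*} (s : Finset α) (f : α → ℚ_[p]) {B : ℝ} (hB : 0 ≤ B)
    (h : ∀ a ∈ s, ‖f a‖ ≤ B) : ‖∑ a ∈ s, f a‖ ≤ B := by
  classical
  induction s using Finset.induction with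
  | empty => simpa using hB
  | insert _ _ ha ih =>
    rw [Finset.sum_insert ha]
    exact le_trans (Padic.nonarchimedean _ _)
      (max_le (h _ (Finset.mem_insert_self _ _))
        (ih fun a has => h a (Finset.mem_insert_of_mem has)))

lemma pow_lip (a b : ℚ_[p]) (ha : ‖a‖ ≤ 1) (hb : ‖b‖ ≤ 1) (k : ℕ) :
    ‖a ^ k - b ^ k‖ ≤ ‖a - b‖ := by
  induction k with
  | zero => simp
  | succ k ih =>
    have hre : a ^ (k + 1) - b ^ (k + 1) = a ^ k * (a - b) + (a ^ k - b ^ k) * b := by ring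
    rw [hre]
    refine le_trans (Padic.nonarchimedean _ _) (max_le ?_ ?_)
    · rw [norm_mul]
      exact mul_le_of_le_one_left (norm_nonneg _)
        (by rw [norm_pow]; exact pow_le_one₀ (norm_nonneg a) ha)
    · rw [norm_mul]
      exact le_trans (mul_le_of_le_one_right (norm_nonneg _) hb) ih

lemma norm_coe_le_one (z : ℤ_[p]) : ‖(z : ℚ_[p])‖ ≤ 1 := by
  rw [PadicInt.padic_norm_e_of_padicInt]; exact PadicInt.norm_le_one z

lemma toZModPow_val (n : ℕ) (a : ZMod (p ^ n)) :
    PadicInt.toZModPow n ((a.val : ℤ_[p])) = a := by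
  haveI : NeZero (p ^ n) := ⟨pow_ne_zero n (Fact.out : p.Prime).ne_zero⟩
  rw [map_natCast, ZMod.natCast_zmod_val]

lemma norm_sub_le_of_toZModPow_eq {n : ℕ} {a b : ℤ_[p]}
    (h : PadicInt.toZModPow n a = PadicInt.toZModPow n b) :
    ‖(a : ℚ_[p]) - (b : ℚ_[p])‖ ≤ ((p : ℝ)⁻¹) ^ n := by
  rw [← PadicInt.coe_sub, PadicInt.padic_norm_e_of_padicInt]
  have h2 : ‖a - b‖ ≤ (p : ℝ) ^ (-n : ℤ) := by
    rw [PadicInt.norm_le_pow_iff_mem_span_pow, ← PadicInt.ker_toZModPow, RingHom.mem_ker,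
      map_sub, sub_eq_zero]
    exact h
  calc ‖a - b‖ ≤ (p : ℝ) ^ (-n : ℤ) := h2
    _ = ((p : ℝ)⁻¹) ^ n := by rw [zpow_neg, inv_pow, zpow_natCast]

/-- discrete antiderivative of `t ^ m`, with a Lipschitz bound. -/
lemma antideriv (m : ℕ) :
    ∃ (h : ℤ_[p] → ℚ_[p]) (C : ℝ), 0 ≤ C ∧
      (∀ t s : ℤ_[p], ‖h t - h s‖ ≤ C * ‖(t : ℚ_[p]) - (s : ℚ_[p])‖) ∧
      (∀ t : ℤ_[p], h t - h (t + 1) = ((t : ℚ_[p])) ^ m) := by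
  induction m using Nat.strong_induction_on with
  | _ m ih =>
  choose hf hC hC0 hlip hid using ih
  set b : ℚ_[p] := -((m : ℚ_[p]) + 1)⁻¹ with hb
  set c : ℕ → ℚ_[p] := fun k => ((m + 1).choose k : ℚ_[p]) * ((m : ℚ_[p]) + 1)⁻¹ with hc
  have hv : ((m : ℚ_[p]) + 1) ≠ 0 := Nat.cast_add_one_ne_zero m
  refine ⟨fun t => b * (t : ℚ_[p]) ^ (m + 1)
      - ∑ k ∈ (Finset.range m).attach, c k.1 * hf k.1 (Finset.mem_range.mp k.2) t,
    ‖b‖ + ∑ k ∈ (Finset.range m).attach, ‖c k.1‖ * hC k.1 (Finset.mem_range.mp k.2),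
    ?_, ?_, ?_⟩
  · have : ∀ k ∈ (Finset.range m).attach,
        0 ≤ ‖c k.1‖ * hC k.1 (Finset.mem_range.mp k.2) :=
      fun k _ => mul_nonneg (norm_nonneg _) (hC0 _ _)
    exact add_nonneg (norm_nonneg _) (Finset.sum_nonneg this)
  · intro t s
    have hre : (b * (t : ℚ_[p]) ^ (m + 1)
        - ∑ k ∈ (Finset.range m).attach, c k.1 * hf k.1 (Finset.mem_range.mp k.2) t)
        - (b * (s : ℚ_[p]) ^ (m + 1)
        - ∑ k ∈ (Finset.range m).attach, c k.1 * hf k.1 (Finset.mem_range.mp k.2) s)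
        = b * ((t : ℚ_[p]) ^ (m + 1) - (s : ℚ_[p]) ^ (m + 1))
          - ∑ k ∈ (Finset.range m).attach,
            c k.1 * (hf k.1 (Finset.mem_range.mp k.2) t - hf k.1 (Finset.mem_range.mp k.2) s) := by
      have hsplit : ∑ k ∈ (Finset.range m).attach,
          c k.1 * (hf k.1 (Finset.mem_range.mp k.2) t - hf k.1 (Finset.mem_range.mp k.2) s)
          = (∑ k ∈ (Finset.range m).attach, c k.1 * hf k.1 (Finset.mem_range.mp k.2) t)
            - ∑ k ∈ (Finset.range m).attach, c k.1 * hf k.1 (Finset.mem_range.mp k.2) s := by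
        rw [← Finset.sum_sub_distrib]
        exact Finset.sum_congr rfl fun k _ => by ring
      rw [hsplit]; ring
    rw [hre]
    refine le_trans (norm_sub_le _ _) ?_
    rw [add_mul]
    refine add_le_add ?_ ?_
    · rw [norm_mul]
      exact mul_le_mul_of_nonneg_left
        (pow_lip _ _ (norm_coe_le_one t) (norm_coe_le_one s) (m + 1)) (norm_nonneg b)
    · refine le_trans (norm_sum_le _ _) ?_
      rw [Finset.sum_mul]
      refine Finset.sum_le_sum fun k hk => ?_
      rw [norm_mul, mul_assoc]
      exact mul_le_mul_of_nonneg_left (hlip _ _ _ _) (norm_nonneg _)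
  · intro t
    have hsum : ∑ k ∈ (Finset.range m).attach,
          c k.1 * (hf k.1 (Finset.mem_range.mp k.2) t - hf k.1 (Finset.mem_range.mp k.2) (t + 1))
        = ∑ k ∈ Finset.range m, c k * (t : ℚ_[p]) ^ k := by
      rw [← Finset.sum_attach (Finset.range m) (fun k => c k * (t : ℚ_[p]) ^ k)]
      exact Finset.sum_congr rfl fun k _ => by rw [hid]
    have hre : (b * (t : ℚ_[p]) ^ (m + 1)
        - ∑ k ∈ (Finset.range m).attach, c k.1 * hf k.1 (Finset.mem_range.mp k.2) t)
        - (b * ((t + 1 : ℤ_[p]) : ℚ_[p]) ^ (m + 1)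
        - ∑ k ∈ (Finset.range m).attach, c k.1 * hf k.1 (Finset.mem_range.mp k.2) (t + 1))
        = b * ((t : ℚ_[p]) ^ (m + 1) - ((t : ℚ_[p]) + 1) ^ (m + 1))
          - ∑ k ∈ Finset.range m, c k * (t : ℚ_[p]) ^ k := by
      rw [← hsum, PadicInt.coe_add, PadicInt.coe_one]
      have hsplit : ∑ k ∈ (Finset.range m).attach,
          c k.1 * (hf k.1 (Finset.mem_range.mp k.2) t - hf k.1 (Finset.mem_range.mp k.2) (t + 1))
          = (∑ k ∈ (Finset.range m).attach, c k.1 * hf k.1 (Finset.mem_range.mp k.2) t)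
            - ∑ k ∈ (Finset.range m).attach, c k.1 * hf k.1 (Finset.mem_range.mp k.2) (t + 1) := by
        rw [← Finset.sum_sub_distrib]
        exact Finset.sum_congr rfl fun k _ => by ring
      rw [hsplit]; ring
    rw [hre]
    -- now a pure identity in u := (t : ℚ_[p])
    set u : ℚ_[p] := (t : ℚ_[p])
    rw [add_pow]
    rw [Finset.sum_range_succ, Finset.sum_range_succ]
    simp only [Nat.choose_succ_self_right, Nat.choose_self, Nat.sub_self, pow_zero, one_pow,
      mul_one, Nat.cast_one, Nat.cast_add, Nat.cast_one]
    have hT : ∑ k ∈ Finset.range m, c k * u ^ k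
        = ((m : ℚ_[p]) + 1)⁻¹ * ∑ k ∈ Finset.range m, u ^ k * 1 ^ (m + 1 - k) * ((m + 1).choose k : ℚ_[p]) := by
      rw [Finset.mul_sum]
      exact Finset.sum_congr rfl fun k _ => by rw [hc]; simp only [one_pow, mul_one]; ring
    rw [hT, hb]
    field_simp
    simp only [one_pow, mul_one]
    ring

lemma prod_norm_le_one {ι : Type*} (s : Finset ι) (u : ι → ℚ_[p])
    (hu : ∀ k ∈ s, ‖u k‖ ≤ 1) : ‖∏ k ∈ s, u k‖ ≤ 1 := by
  rw [norm_prod]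
  exact Finset.prod_le_one (fun k _ => norm_nonneg _) hu

lemma prod_sub_le {ι : Type*} (s : Finset ι) (u v : ι → ℚ_[p]) (δ : ℝ) (hδ : 0 ≤ δ)
    (hu : ∀ k ∈ s, ‖u k‖ ≤ 1) (hv : ∀ k ∈ s, ‖v k‖ ≤ 1)
    (hd : ∀ k ∈ s, ‖u k - v k‖ ≤ δ) :
    ‖∏ k ∈ s, u k - ∏ k ∈ s, v k‖ ≤ s.card * δ := by
  classical
  induction s using Finset.induction with
  | empty => simpa using hδ
  | @insert a s ha ih =>
    rw [Finset.prod_insert ha, Finset.prod_insert ha, Finset.card_insert_of_notMem ha]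
    have hPu : ‖∏ k ∈ s, u k‖ ≤ 1 :=
      prod_norm_le_one s u fun k hk => hu k (Finset.mem_insert_of_mem hk)
    have hPv : ‖∏ k ∈ s, v k‖ ≤ 1 :=
      prod_norm_le_one s v fun k hk => hv k (Finset.mem_insert_of_mem hk)
    have hihs : ‖∏ k ∈ s, u k - ∏ k ∈ s, v k‖ ≤ s.card * δ :=
      ih (fun k hk => hu k (Finset.mem_insert_of_mem hk))
        (fun k hk => hv k (Finset.mem_insert_of_mem hk))
        (fun k hk => hd k (Finset.mem_insert_of_mem hk))
    have hre : u a * ∏ k ∈ s, u k - v a * ∏ k ∈ s, v k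
        = u a * (∏ k ∈ s, u k - ∏ k ∈ s, v k) + (u a - v a) * ∏ k ∈ s, v k := by ring
    rw [hre]
    refine le_trans (norm_add_le _ _) ?_
    have t1 : ‖u a * (∏ k ∈ s, u k - ∏ k ∈ s, v k)‖ ≤ s.card * δ := by
      rw [norm_mul]
      exact le_trans (mul_le_of_le_one_left (norm_nonneg _)
        (hu a (Finset.mem_insert_self _ _))) hihs
    have t2 : ‖(u a - v a) * ∏ k ∈ s, v k‖ ≤ δ := by
      rw [norm_mul]
      exact le_trans (mul_le_of_le_one_right (norm_nonneg _) hPv)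
        (hd a (Finset.mem_insert_self _ _))
    push_cast
    nlinarith [t1, t2]

lemma key (r : ℕ) (G : PadicMeasureV p (r + 1))
    (hsym : ∀ (n : ℕ) (i : Fin (r + 1) → ZMod (p ^ n)),
      G.val n i - G.val n (fun j => -(i j)) + G.val n (fun j => -(i j) + 1)
        - G.val n (fun j => i j - 1) = 0)
    (g : (Fin (r + 1) → ℤ_[p]) → ℚ_[p]) (L : ℝ)
    (hL : ∀ (x y : Fin (r + 1) → ℤ_[p]) (ε : ℝ), 0 ≤ ε →
      (∀ j, ‖(x j : ℚ_[p]) - (y j : ℚ_[p])‖ ≤ ε) → ‖g x - g y‖ ≤ L * ε) :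
    G.HasIntegral (fun x => g x - g (-x) + g (1 - x) - g (x + 1)) 0 := by
  obtain ⟨CG, hCG⟩ := G.bounded
  set L' : ℝ := max L 0 with hL'
  set CG' : ℝ := max CG 0 with hCG'
  have hL'0 : 0 ≤ L' := le_max_right _ _
  have hCG'0 : 0 ≤ CG' := le_max_right _ _
  have hp1 : 1 < (p : ℝ) := by exact_mod_cast (Fact.out : p.Prime).one_lt
  rw [PadicMeasureV.HasIntegral]
  apply squeeze_zero_norm (a := fun n => (L' * CG') * ((p : ℝ)⁻¹) ^ n)
  · intro n
    set Lf : (Fin (r + 1) → ZMod (p ^ n)) → (Fin (r + 1) → ℤ_[p]) :=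
      fun i j => (((i j).val : ℤ_[p])) with hLf
    have hε : (0 : ℝ) ≤ ((p : ℝ)⁻¹) ^ n :=
      pow_nonneg (inv_nonneg.mpr (by positivity)) n
    have h1 : ∑ i : Fin (r + 1) → ZMod (p ^ n),
        g (Lf i) * (G.val n i - G.val n (fun j => -(i j)) + G.val n (fun j => -(i j) + 1)
          - G.val n (fun j => i j - 1)) = 0 :=
      Finset.sum_eq_zero fun i _ => by rw [hsym n i, mul_zero]
    have e2 : ∑ i : Fin (r + 1) → ZMod (p ^ n), g (Lf i) * G.val n (fun j => -(i j))
        = ∑ i : Fin (r + 1) → ZMod (p ^ n), g (Lf (-i)) * G.val n i := by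
      refine Fintype.sum_equiv (Equiv.neg _) _ _ fun i => ?_
      simp only [Equiv.neg_apply, neg_neg]
      rfl
    have e3 : ∑ i : Fin (r + 1) → ZMod (p ^ n), g (Lf i) * G.val n (fun j => -(i j) + 1)
        = ∑ i : Fin (r + 1) → ZMod (p ^ n), g (Lf (1 - i)) * G.val n i := by
      refine Fintype.sum_equiv ((Equiv.neg _).trans (Equiv.addRight 1)) _ _ fun i => ?_
      simp only [Equiv.trans_apply, Equiv.neg_apply, Equiv.coe_addRight]
      have hi : (1 : Fin (r + 1) → ZMod (p ^ n)) - (-i + 1) = i := by ring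
      rw [hi]
      rfl
    have e4 : ∑ i : Fin (r + 1) → ZMod (p ^ n), g (Lf i) * G.val n (fun j => i j - 1)
        = ∑ i : Fin (r + 1) → ZMod (p ^ n), g (Lf (i + 1)) * G.val n i := by
      refine Fintype.sum_equiv (Equiv.subRight 1) _ _ fun i => ?_
      simp only [Equiv.subRight_apply]
      have hi : (i - 1) + 1 = i := by ring
      rw [hi]
      rfl
    have hzero : ∑ i : Fin (r + 1) → ZMod (p ^ n),
        (g (Lf i) - g (Lf (-i)) + g (Lf (1 - i)) - g (Lf (i + 1))) * G.val n i = 0 := by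
      have expand : ∑ i : Fin (r + 1) → ZMod (p ^ n),
          (g (Lf i) - g (Lf (-i)) + g (Lf (1 - i)) - g (Lf (i + 1))) * G.val n i
          = ∑ i : Fin (r + 1) → ZMod (p ^ n), g (Lf i) * G.val n i
            - ∑ i : Fin (r + 1) → ZMod (p ^ n), g (Lf (-i)) * G.val n i
            + ∑ i : Fin (r + 1) → ZMod (p ^ n), g (Lf (1 - i)) * G.val n i
            - ∑ i : Fin (r + 1) → ZMod (p ^ n), g (Lf (i + 1)) * G.val n i := by
        rw [← Finset.sum_sub_distrib, ← Finset.sum_add_distrib, ← Finset.sum_sub_distrib]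
        exact Finset.sum_congr rfl fun i _ => by ring
      have expand2 : ∑ i : Fin (r + 1) → ZMod (p ^ n),
          g (Lf i) * (G.val n i - G.val n (fun j => -(i j)) + G.val n (fun j => -(i j) + 1)
            - G.val n (fun j => i j - 1))
          = ∑ i : Fin (r + 1) → ZMod (p ^ n), g (Lf i) * G.val n i
            - ∑ i : Fin (r + 1) → ZMod (p ^ n), g (Lf i) * G.val n (fun j => -(i j))
            + ∑ i : Fin (r + 1) → ZMod (p ^ n), g (Lf i) * G.val n (fun j => -(i j) + 1)
            - ∑ i : Fin (r + 1) → ZMod (p ^ n), g (Lf i) * G.val n (fun j => i j - 1) := by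
        rw [← Finset.sum_sub_distrib, ← Finset.sum_add_distrib, ← Finset.sum_sub_distrib]
        exact Finset.sum_congr rfl fun i _ => by ring
      rw [expand, ← e2, ← e3, ← e4, ← expand2, h1]
    have hrs : G.riemannSum (fun x => g x - g (-x) + g (1 - x) - g (x + 1)) n
        = ∑ i : Fin (r + 1) → ZMod (p ^ n),
            ((g (Lf i) - g (-(Lf i)) + g (1 - Lf i) - g (Lf i + 1))
              - (g (Lf i) - g (Lf (-i)) + g (Lf (1 - i)) - g (Lf (i + 1)))) * G.val n i := by
      have h0 : G.riemannSum (fun x => g x - g (-x) + g (1 - x) - g (x + 1)) n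
          = ∑ i : Fin (r + 1) → ZMod (p ^ n),
            (g (Lf i) - g (-(Lf i)) + g (1 - Lf i) - g (Lf i + 1)) * G.val n i := rfl
      have hsplit : ∑ i : Fin (r + 1) → ZMod (p ^ n),
            ((g (Lf i) - g (-(Lf i)) + g (1 - Lf i) - g (Lf i + 1))
              - (g (Lf i) - g (Lf (-i)) + g (Lf (1 - i)) - g (Lf (i + 1)))) * G.val n i
          = ∑ i : Fin (r + 1) → ZMod (p ^ n),
              (g (Lf i) - g (-(Lf i)) + g (1 - Lf i) - g (Lf i + 1)) * G.val n i
            - ∑ i : Fin (r + 1) → ZMod (p ^ n),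
              (g (Lf i) - g (Lf (-i)) + g (Lf (1 - i)) - g (Lf (i + 1))) * G.val n i := by
        rw [← Finset.sum_sub_distrib]
        exact Finset.sum_congr rfl fun i _ => by ring
      rw [h0, hsplit, hzero, sub_zero]
    rw [hrs]
    refine norm_sum_le_of_le _ _ (mul_nonneg (mul_nonneg hL'0 hCG'0) hε) fun i _ => ?_
    have hDa : ‖g (Lf (-i)) - g (-(Lf i))‖ ≤ L' * ((p : ℝ)⁻¹) ^ n := by
      refine le_trans (hL _ _ _ hε fun j => ?_)
        (mul_le_mul_of_nonneg_right (le_max_left _ _) hε)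
      apply norm_sub_le_of_toZModPow_eq
      show PadicInt.toZModPow n ((((-i) j).val : ℤ_[p]))
          = PadicInt.toZModPow n (-(((i j).val : ℤ_[p])))
      rw [toZModPow_val, map_neg, toZModPow_val]
      rfl
    have hDb : ‖g (1 - Lf i) - g (Lf (1 - i))‖ ≤ L' * ((p : ℝ)⁻¹) ^ n := by
      refine le_trans (hL _ _ _ hε fun j => ?_)
        (mul_le_mul_of_nonneg_right (le_max_left _ _) hε)
      apply norm_sub_le_of_toZModPow_eq
      show PadicInt.toZModPow n ((1 : ℤ_[p]) - ((i j).val : ℤ_[p]))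
          = PadicInt.toZModPow n ((((1 - i) j).val : ℤ_[p]))
      rw [map_sub, map_one, toZModPow_val, toZModPow_val]
      rfl
    have hDc : ‖g (Lf (i + 1)) - g (Lf i + 1)‖ ≤ L' * ((p : ℝ)⁻¹) ^ n := by
      refine le_trans (hL _ _ _ hε fun j => ?_)
        (mul_le_mul_of_nonneg_right (le_max_left _ _) hε)
      apply norm_sub_le_of_toZModPow_eq
      show PadicInt.toZModPow n ((((i + 1) j).val : ℤ_[p]))
          = PadicInt.toZModPow n (((i j).val : ℤ_[p]) + 1)
      rw [map_add, map_one, toZModPow_val, toZModPow_val]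
      rfl
    have hre : (g (Lf i) - g (-(Lf i)) + g (1 - Lf i) - g (Lf i + 1))
          - (g (Lf i) - g (Lf (-i)) + g (Lf (1 - i)) - g (Lf (i + 1)))
        = (g (Lf (-i)) - g (-(Lf i))) + (g (1 - Lf i) - g (Lf (1 - i)))
          + (g (Lf (i + 1)) - g (Lf i + 1)) := by ring
    rw [norm_mul, hre]
    have hD : ‖(g (Lf (-i)) - g (-(Lf i))) + (g (1 - Lf i) - g (Lf (1 - i)))
          + (g (Lf (i + 1)) - g (Lf i + 1))‖ ≤ L' * ((p : ℝ)⁻¹) ^ n :=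
      le_trans (Padic.nonarchimedean _ _)
        (max_le (le_trans (Padic.nonarchimedean _ _) (max_le hDa hDb)) hDc)
    calc ‖(g (Lf (-i)) - g (-(Lf i))) + (g (1 - Lf i) - g (Lf (1 - i)))
          + (g (Lf (i + 1)) - g (Lf i + 1))‖ * ‖G.val n i‖
        ≤ (L' * ((p : ℝ)⁻¹) ^ n) * CG' :=
          mul_le_mul hD (le_trans (hCG n i) (le_max_left _ _)) (norm_nonneg _)
            (mul_nonneg hL'0 hε)
      _ = L' * CG' * ((p : ℝ)⁻¹) ^ n := by ring
  · have := tendsto_pow_atTop_nhds_zero_of_lt_one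
      (inv_nonneg.mpr (le_of_lt (lt_trans one_pos hp1))) (inv_lt_one_of_one_lt₀ hp1)
    simpa using this.const_mul (L' * CG')

end OddAux

/-- If `G(A) − G(ι(A)) + G(τ(ι(A))) − G(τ⁻¹(A)) = 0` (with `ι` coordinatewise negation
and `τ` coordinatewise translation by `1`) then for exponents `n₁,…,n_r` of odd sum,
`∫ (x₁−x₂)^{n₁}⋯(x_{r−1}−x_r)^{n_{r−1}} x_r^{n_r} dG = 0`. -/
theorem odd_weight_integral_vanishes (p : ℕ) [Fact p.Prime] (r : ℕ)
    (G : PadicMeasureV p (r + 1))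
    (hsym : ∀ (n : ℕ) (i : Fin (r + 1) → ZMod (p ^ n)),
      G.val n i - G.val n (fun j => -(i j)) + G.val n (fun j => -(i j) + 1)
        - G.val n (fun j => i j - 1) = 0)
    (e : Fin (r + 1) → ℕ) (hodd : Odd (∑ j, e j)) :
    G.HasIntegral (fun x =>
      (∏ j : Fin r, ((x j.castSucc : ℚ_[p]) - (x j.succ : ℚ_[p])) ^ e j.castSucc)
        * (x (Fin.last r) : ℚ_[p]) ^ e (Fin.last r)) 0 := by

  classical
  set m : ℕ := e (Fin.last r) with hm
  set d : ℕ := ∑ j : Fin r, e j.castSucc with hd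
  have hodd' : Odd (d + m) := by rwa [Fin.sum_univ_castSucc] at hodd
  obtain ⟨h, C, hC0, hlip, hid⟩ := OddAux.antideriv (p := p) m
  set Mf : (Fin (r + 1) → ℤ_[p]) → ℚ_[p] :=
    fun x => ∏ j : Fin r, ((x j.castSucc : ℚ_[p]) - (x j.succ : ℚ_[p])) ^ e j.castSucc with hMf
  set gg : (Fin (r + 1) → ℤ_[p]) → ℚ_[p] :=
    fun x => (2 : ℚ_[p])⁻¹ * (Mf x * h (x (Fin.last r))) with hgg
  have hM_le : ∀ x, ‖Mf x‖ ≤ 1 := by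
    intro x
    refine OddAux.prod_norm_le_one _ _ fun j _ => ?_
    rw [norm_pow]
    refine pow_le_one₀ (norm_nonneg _) ?_
    rw [← PadicInt.coe_sub]
    exact OddAux.norm_coe_le_one _
  have hM_lip : ∀ (x y : Fin (r + 1) → ℤ_[p]) (ε : ℝ), 0 ≤ ε →
      (∀ j, ‖(x j : ℚ_[p]) - (y j : ℚ_[p])‖ ≤ ε) → ‖Mf x - Mf y‖ ≤ (r : ℝ) * (2 * ε) := by
    intro x y ε hε hco
    have := OddAux.prod_sub_le (p := p) Finset.univ
      (fun j : Fin r => ((x j.castSucc : ℚ_[p]) - (x j.succ : ℚ_[p])) ^ e j.castSucc)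
      (fun j : Fin r => ((y j.castSucc : ℚ_[p]) - (y j.succ : ℚ_[p])) ^ e j.castSucc)
      (2 * ε) (by linarith)
      (fun j _ => by
        rw [norm_pow]
        refine pow_le_one₀ (norm_nonneg _) ?_
        rw [← PadicInt.coe_sub]; exact OddAux.norm_coe_le_one _)
      (fun j _ => by
        rw [norm_pow]
        refine pow_le_one₀ (norm_nonneg _) ?_
        rw [← PadicInt.coe_sub]; exact OddAux.norm_coe_le_one _)
      (fun j _ => by
        refine le_trans (OddAux.pow_lip _ _ ?_ ?_ _) ?_
        · rw [← PadicInt.coe_sub]; exact OddAux.norm_coe_le_one _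
        · rw [← PadicInt.coe_sub]; exact OddAux.norm_coe_le_one _
        · have hre : ((x j.castSucc : ℚ_[p]) - (x j.succ : ℚ_[p]))
              - ((y j.castSucc : ℚ_[p]) - (y j.succ : ℚ_[p]))
              = ((x j.castSucc : ℚ_[p]) - (y j.castSucc : ℚ_[p]))
                - ((x j.succ : ℚ_[p]) - (y j.succ : ℚ_[p])) := by ring
          rw [hre]
          refine le_trans (norm_sub_le _ _) ?_
          have := hco j.castSucc
          have := hco j.succ
          linarith)
    simpa [Finset.card_univ] using this
  have hh_bd : ∀ t : ℤ_[p], ‖h t‖ ≤ ‖h 0‖ + C := by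
    intro t
    have h1 : ‖h t‖ = ‖h 0 + (h t - h 0)‖ := by ring_nf
    rw [h1]
    refine le_trans (norm_add_le _ _) ?_
    have h2 : ‖h t - h 0‖ ≤ C := by
      refine le_trans (hlip t 0) ?_
      rw [PadicInt.coe_zero, sub_zero]
      exact mul_le_of_le_one_right hC0 (OddAux.norm_coe_le_one t)
    linarith
  set Lg : ℝ := ‖(2 : ℚ_[p])⁻¹‖ * (C + 2 * r * (‖h 0‖ + C)) with hLg
  have hgg_lip : ∀ (x y : Fin (r + 1) → ℤ_[p]) (ε : ℝ), 0 ≤ ε →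
      (∀ j, ‖(x j : ℚ_[p]) - (y j : ℚ_[p])‖ ≤ ε) → ‖gg x - gg y‖ ≤ Lg * ε := by
    intro x y ε hε hco
    have hre : gg x - gg y = (2 : ℚ_[p])⁻¹
        * (Mf x * (h (x (Fin.last r)) - h (y (Fin.last r)))
          + (Mf x - Mf y) * h (y (Fin.last r))) := by
      rw [hgg]; ring
    rw [hre, norm_mul]
    have t1 : ‖Mf x * (h (x (Fin.last r)) - h (y (Fin.last r)))‖ ≤ C * ε := by
      rw [norm_mul]
      refine le_trans (mul_le_of_le_one_left (norm_nonneg _) (hM_le x)) ?_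
      refine le_trans (hlip _ _) ?_
      exact mul_le_mul_of_nonneg_left (hco (Fin.last r)) hC0
    have t2 : ‖(Mf x - Mf y) * h (y (Fin.last r))‖ ≤ ((r : ℝ) * (2 * ε)) * (‖h 0‖ + C) := by
      rw [norm_mul]
      refine mul_le_mul (hM_lip x y ε hε hco) (hh_bd _) (norm_nonneg _) ?_
      positivity
    have t3 : ‖Mf x * (h (x (Fin.last r)) - h (y (Fin.last r)))
          + (Mf x - Mf y) * h (y (Fin.last r))‖
        ≤ C * ε + ((r : ℝ) * (2 * ε)) * (‖h 0‖ + C) :=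
      le_trans (norm_add_le _ _) (add_le_add t1 t2)
    calc ‖(2 : ℚ_[p])⁻¹‖ * ‖Mf x * (h (x (Fin.last r)) - h (y (Fin.last r)))
          + (Mf x - Mf y) * h (y (Fin.last r))‖
        ≤ ‖(2 : ℚ_[p])⁻¹‖ * (C * ε + ((r : ℝ) * (2 * ε)) * (‖h 0‖ + C)) :=
          mul_le_mul_of_nonneg_left t3 (norm_nonneg _)
      _ = Lg * ε := by rw [hLg]; ring
  have hsign : (-1 : ℚ_[p]) ^ d * (-1 : ℚ_[p]) ^ m = -1 := by
    rw [← pow_add]; exact Odd.neg_one_pow hodd'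
  have hM1 : ∀ x : Fin (r + 1) → ℤ_[p], Mf (x + 1) = Mf x := by
    intro x
    refine Finset.prod_congr rfl fun j _ => ?_
    have h1 : (x + 1) j.castSucc = x j.castSucc + 1 := rfl
    have h2 : (x + 1) j.succ = x j.succ + 1 := rfl
    rw [h1, h2, PadicInt.coe_add, PadicInt.coe_add, PadicInt.coe_one]
    ring_nf
  have hM2 : ∀ x : Fin (r + 1) → ℤ_[p], Mf (-x) = (-1 : ℚ_[p]) ^ d * Mf x := by
    intro x
    rw [hd, ← Finset.prod_pow_eq_pow_sum, ← Finset.prod_mul_distrib]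
    refine Finset.prod_congr rfl fun j _ => ?_
    have h1 : (-x) j.castSucc = -(x j.castSucc) := rfl
    have h2 : (-x) j.succ = -(x j.succ) := rfl
    rw [h1, h2, PadicInt.coe_neg, PadicInt.coe_neg,
      show -(x j.castSucc : ℚ_[p]) - -(x j.succ : ℚ_[p])
        = -((x j.castSucc : ℚ_[p]) - (x j.succ : ℚ_[p])) from by ring,
      neg_pow]
  have hM3 : ∀ x : Fin (r + 1) → ℤ_[p], Mf (1 - x) = (-1 : ℚ_[p]) ^ d * Mf x := by
    intro x
    rw [hd, ← Finset.prod_pow_eq_pow_sum, ← Finset.prod_mul_distrib]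
    refine Finset.prod_congr rfl fun j _ => ?_
    have h1 : (1 - x) j.castSucc = 1 - x j.castSucc := rfl
    have h2 : (1 - x) j.succ = 1 - x j.succ := rfl
    rw [h1, h2, PadicInt.coe_sub, PadicInt.coe_sub, PadicInt.coe_one,
      show (1 : ℚ_[p]) - (x j.castSucc : ℚ_[p]) - ((1 : ℚ_[p]) - (x j.succ : ℚ_[p]))
        = -((x j.castSucc : ℚ_[p]) - (x j.succ : ℚ_[p])) from by ring,
      neg_pow]
  have hfun : (fun x : Fin (r + 1) → ℤ_[p] =>
        (∏ j : Fin r, ((x j.castSucc : ℚ_[p]) - (x j.succ : ℚ_[p])) ^ e j.castSucc)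
          * (x (Fin.last r) : ℚ_[p]) ^ e (Fin.last r))
      = fun x => gg x - gg (-x) + gg (1 - x) - gg (x + 1) := by
    funext x
    have hlast1 : (-x) (Fin.last r) = -(x (Fin.last r)) := rfl
    have hlast2 : (1 - x) (Fin.last r) = 1 - x (Fin.last r) := rfl
    have hlast3 : (x + 1) (Fin.last r) = x (Fin.last r) + 1 := rfl
    rw [hgg]
    simp only []
    rw [hlast1, hlast2, hlast3, hM1 x, hM2 x, hM3 x,
      show (1 : ℤ_[p]) - x (Fin.last r) = -(x (Fin.last r)) + 1 from by ring]
    have hq1 : h (x (Fin.last r)) - h (x (Fin.last r) + 1) = (x (Fin.last r) : ℚ_[p]) ^ m :=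
      hid _
    have hq2 : h (-(x (Fin.last r))) - h (-(x (Fin.last r)) + 1)
        = (-1 : ℚ_[p]) ^ m * (x (Fin.last r) : ℚ_[p]) ^ m := by
      rw [hid (-(x (Fin.last r))), PadicInt.coe_neg, neg_pow]
    have h2 : (2 : ℚ_[p]) ≠ 0 := two_ne_zero
    rw [← hm]
    linear_combination (-((2 : ℚ_[p])⁻¹ * Mf x)) * hq1
      + ((2 : ℚ_[p])⁻¹ * ((-1 : ℚ_[p]) ^ d) * Mf x) * hq2
      + ((2 : ℚ_[p])⁻¹ * Mf x * (x (Fin.last r) : ℚ_[p]) ^ m) * hsign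
  rw [hfun]
  exact OddAux.key r G hsym gg Lg hgg_lip
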